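/- The conductance of the lazy tree-walk Markov chain is at least 1/(4(n+1)). Precisely: let S be a binary tree of height at most n, π(i) = α·2^{n−d_i} the stationary distribution, and for adjacent nodes u (parent) and v (child) let w(u,v) = π(u)/8 = α·2^{n−d_u−3} be the edge weight of the lazy chain. Then for every subset Y of the nodes of S with 0 < π(Y) ≤ 1/2, we have (∑_{i∈Y, j∉Y} w(i,j)) / π(Y) ≥ 1/(4(n+1)). -/

import Mathlib

/-- Edge weights of the lazy tree walk: for `u` the parent of `v`,
w(u,v) = π(u)/8 = α·2^{n−d_u−3}; zero for non-adjacent pairs. -/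
noncomputable def lazyEdgeWeight (n : ℕ) (α : ℝ) (i j : List Bool) : ℝ :=
  if i ≠ [] ∧ j = i.dropLast then α * 2 ^ (n - j.length) / 8
  else if j ≠ [] ∧ i = j.dropLast then α * 2 ^ (n - i.length) / 8
  else 0

lemma lazyEdgeWeight_nonneg (n : ℕ) (α : ℝ) (hα : 0 ≤ α) (i j : List Bool) :
    0 ≤ lazyEdgeWeight n α i j := by
  unfold lazyEdgeWeight
  split_ifs <;> positivity

lemma lazyEdgeWeight_symm (n : ℕ) (α : ℝ) (i j : List Bool) :
    lazyEdgeWeight n α i j = lazyEdgeWeight n α j i := by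
  unfold lazyEdgeWeight
  by_cases hA : i ≠ [] ∧ j = i.dropLast
  · have hB : ¬ (j ≠ [] ∧ i = j.dropLast) := by
      rintro ⟨hj, hi⟩
      have h1 : j.length = i.length - 1 := by rw [hA.2, List.length_dropLast]
      have h2 : i.length = j.length - 1 := by rw [hi, List.length_dropLast]
      have : 1 ≤ i.length := List.length_pos_iff.mpr hA.1
      have : 1 ≤ j.length := List.length_pos_iff.mpr hj
      omega
    rw [if_pos hA, if_neg hB, if_pos hA]
  · by_cases hB : j ≠ [] ∧ i = j.dropLast
    · rw [if_neg hA, if_pos hB, if_pos hB]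
    · rw [if_neg hA, if_neg hB, if_neg hB, if_neg hA]


/-- Walk up from `y` until the parent is outside `Y` (with fuel). -/
def exitAux (Y : Finset (List Bool)) : ℕ → List Bool → List Bool
  | 0, y => y
  | (k+1), y => if y.dropLast ∈ Y then exitAux Y k y.dropLast else y

lemma exitAux_spec (Y : Finset (List Bool)) (hroot : [] ∉ Y) :
    ∀ (k : ℕ) (y : List Bool), y ∈ Y → y.length ≤ k →
      exitAux Y k y ∈ Y ∧ exitAux Y k y ≠ [] ∧ (exitAux Y k y).dropLast ∉ Y ∧
        exitAux Y k y <+: y := by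
  intro k
  induction k with
  | zero =>
    intro y hy hl
    have : y = [] := List.length_eq_zero_iff.mp (Nat.le_zero.mp hl)
    exact absurd (this ▸ hy) hroot
  | succ k ih =>
    intro y hy hl
    have hyne : y ≠ [] := by rintro rfl; exact hroot hy
    have hylen : 1 ≤ y.length := List.length_pos_iff.mpr hyne
    rw [exitAux]
    split
    · next h =>
      have hdl : y.dropLast.length ≤ k := by
        rw [List.length_dropLast]; omega
      obtain ⟨h1, h2, h3, h4⟩ := ih y.dropLast h hdl
      exact ⟨h1, h2, h3, h4.trans (List.dropLast_prefix y)⟩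
    · next h =>
      exact ⟨hy, hyne, h, List.prefix_refl y⟩


lemma count_prefix_le (T : Finset (List Bool)) (c : List Bool) (l : ℕ)
    (hpre : ∀ y ∈ T, c <+: y) :
    (T.filter (fun y => y.length = l)).card ≤ 2 ^ (l - c.length) := by
  classical
  have := Finset.card_le_card_of_injOn
    (s := T.filter (fun y => y.length = l))
    (f := fun y : List Bool => fun i : Fin (l - c.length) => y.getD (c.length + i) false)
    (t := (Finset.univ : Finset (Fin (l - c.length) → Bool)))
    (fun y _ => Finset.mem_univ _)
    ?_
  · calc (T.filter (fun y => y.length = l)).card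
        ≤ (Finset.univ : Finset (Fin (l - c.length) → Bool)).card := this
      _ = 2 ^ (l - c.length) := by
          simp [Finset.card_univ]
  · intro y₁ hy₁ y₂ hy₂ hf
    simp only [Finset.mem_coe, Finset.mem_filter] at hy₁ hy₂
    obtain ⟨t₁, ht₁⟩ := hpre y₁ hy₁.1
    obtain ⟨t₂, ht₂⟩ := hpre y₂ hy₂.1
    have hl₁ : t₁.length = l - c.length := by
      have := hy₁.2; rw [← ht₁, List.length_append] at this; omega
    have hl₂ : t₂.length = l - c.length := by
      have := hy₂.2; rw [← ht₂, List.length_append] at this; omega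
    have hcl : c.length ≤ l := by
      have := hy₁.2; rw [← ht₁, List.length_append] at this; omega
    have ht : t₁ = t₂ := by
      apply List.ext_getElem (by rw [hl₁, hl₂])
      intro i h1 h2
      have hi : i < l - c.length := by omega
      have := congrFun hf ⟨i, hi⟩
      simp only at this
      have e₁ : y₁.getD (c.length + i) false = t₁[i] := by
        rw [← ht₁]
        rw [List.getD_eq_getElem _ _ (by rw [List.length_append]; omega)]
        simp [List.getElem_append_right]
      have e₂ : y₂.getD (c.length + i) false = t₂[i] := by
        rw [← ht₂]
        rw [List.getD_eq_getElem _ _ (by rw [List.length_append]; omega)]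
        simp [List.getElem_append_right]
      rw [e₁, e₂] at this
      exact this
    rw [← ht₁, ← ht₂, ht]

lemma sum_mass_le (n : ℕ) (T : Finset (List Bool)) (c : List Bool)
    (hlen : ∀ y ∈ T, y.length ≤ n)
    (hpre : ∀ y ∈ T, c <+: y) :
    ∑ y ∈ T, (2:ℝ) ^ (n - y.length) ≤ (n + 1) * 2 ^ (n - c.length) := by
  classical
  have hpart : ∑ y ∈ T, (2:ℝ) ^ (n - y.length)
      = ∑ l ∈ Finset.range (n+1), ∑ y ∈ T.filter (fun y => y.length = l),
          (2:ℝ) ^ (n - y.length) :=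
    (Finset.sum_fiberwise_of_maps_to
      (fun y hy => Finset.mem_range.mpr (Nat.lt_succ_of_le (hlen y hy))) _).symm
  rw [hpart]
  have hbound : ∀ l ∈ Finset.range (n+1),
      ∑ y ∈ T.filter (fun y => y.length = l), (2:ℝ) ^ (n - y.length)
        ≤ (2:ℝ) ^ (n - c.length) := by
    intro l hl
    have hln : l ≤ n := Nat.lt_succ_iff.mp (Finset.mem_range.mp hl)
    have hconst : ∑ y ∈ T.filter (fun y => y.length = l), (2:ℝ) ^ (n - y.length)
        = (T.filter (fun y => y.length = l)).card * (2:ℝ) ^ (n - l) := by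
      rw [Finset.sum_congr rfl (fun y hy => by
        rw [(Finset.mem_filter.mp hy).2])]
      rw [Finset.sum_const, nsmul_eq_mul]
    rw [hconst]
    by_cases hcl : c.length ≤ l
    · have hcard := count_prefix_le T c l hpre
      have hcard' : ((T.filter (fun y => y.length = l)).card : ℝ) ≤ 2 ^ (l - c.length) := by
        exact_mod_cast hcard
      calc ((T.filter (fun y => y.length = l)).card : ℝ) * 2 ^ (n - l)
          ≤ (2:ℝ) ^ (l - c.length) * 2 ^ (n - l) := by
            apply mul_le_mul_of_nonneg_right hcard' (by positivity)
        _ = (2:ℝ) ^ (n - c.length) := by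
            rw [← pow_add]
            congr 1
            omega
    · have : T.filter (fun y => y.length = l) = ∅ := by
        apply Finset.filter_eq_empty_iff.mpr
        intro y hy hyl
        exact hcl (hyl ▸ (hpre y hy).length_le)
      rw [this]
      simp
  calc ∑ l ∈ Finset.range (n+1), ∑ y ∈ T.filter (fun y => y.length = l),
          (2:ℝ) ^ (n - y.length)
      ≤ ∑ _l ∈ Finset.range (n+1), (2:ℝ) ^ (n - c.length) :=
        Finset.sum_le_sum hbound
    _ = (n + 1) * 2 ^ (n - c.length) := by
        rw [Finset.sum_const, Finset.card_range, nsmul_eq_mul]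
        push_cast
        ring

lemma core (n : ℕ) (S : Finset (List Bool))
    (hclosed : ∀ l ∈ S, l ≠ [] → l.dropLast ∈ S)
    (hheight : ∀ l ∈ S, l.length ≤ n)
    (α : ℝ) (hα : 0 < α)
    (Y : Finset (List Bool)) (hYS : Y ⊆ S) (hrootY : [] ∉ Y) :
    (∑ i ∈ Y, α * 2 ^ (n - i.length)) / (4 * (n + 1))
      ≤ ∑ i ∈ Y, ∑ j ∈ S \ Y, lazyEdgeWeight n α i j := by
  classical
  set C : Finset (List Bool) := Y.filter (fun c => c.dropLast ∉ Y) with hC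
  have hCmem : ∀ c ∈ C, c ∈ Y ∧ c ≠ [] ∧ c.dropLast ∉ Y := by
    intro c hc
    obtain ⟨h1, h2⟩ := Finset.mem_filter.mp hc
    exact ⟨h1, by rintro rfl; exact hrootY h1, h2⟩
  -- Step A: mass bound
  have hA : ∑ i ∈ Y, α * 2 ^ (n - i.length)
      ≤ (n + 1) * ∑ c ∈ C, α * 2 ^ (n - c.length) := by
    have hmaps : ∀ y ∈ Y, exitAux Y y.length y ∈ C := by
      intro y hy
      obtain ⟨h1, h2, h3, _⟩ := exitAux_spec Y hrootY y.length y hy le_rfl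
      exact Finset.mem_filter.mpr ⟨h1, h3⟩
    have hpart : ∑ c ∈ C, ∑ y ∈ Y.filter (fun y => exitAux Y y.length y = c),
          (α * 2 ^ (n - y.length)) = ∑ y ∈ Y, α * 2 ^ (n - y.length) :=
      Finset.sum_fiberwise_of_maps_to hmaps _
    rw [← hpart, Finset.mul_sum]
    apply Finset.sum_le_sum
    intro c hc
    have hfib : ∀ y ∈ Y.filter (fun y => exitAux Y y.length y = c),
        c <+: y ∧ y.length ≤ n := by
      intro y hy
      obtain ⟨hy1, hy2⟩ := Finset.mem_filter.mp hy
      obtain ⟨_, _, _, h4⟩ := exitAux_spec Y hrootY y.length y hy1 le_rfl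
      exact ⟨hy2 ▸ h4, hheight y (hYS hy1)⟩
    calc ∑ y ∈ Y.filter (fun y => exitAux Y y.length y = c), α * 2 ^ (n - y.length)
        = α * ∑ y ∈ Y.filter (fun y => exitAux Y y.length y = c), (2:ℝ) ^ (n - y.length) := by
          rw [Finset.mul_sum]
      _ ≤ α * ((n + 1) * 2 ^ (n - c.length)) := by
          apply mul_le_mul_of_nonneg_left _ hα.le
          exact sum_mass_le n _ c (fun y hy => (hfib y hy).2) (fun y hy => (hfib y hy).1)
      _ = (n + 1) * (α * 2 ^ (n - c.length)) := by ring
  -- Step B: cut bound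
  have hB : ∑ c ∈ C, α * 2 ^ (n - c.length)
      ≤ 4 * ∑ i ∈ Y, ∑ j ∈ S \ Y, lazyEdgeWeight n α i j := by
    have hsub : ∑ c ∈ C, ∑ j ∈ S \ Y, lazyEdgeWeight n α c j
        ≤ ∑ i ∈ Y, ∑ j ∈ S \ Y, lazyEdgeWeight n α i j := by
      apply Finset.sum_le_sum_of_subset_of_nonneg (Finset.filter_subset _ _)
      intro i _ _
      exact Finset.sum_nonneg fun j _ => lazyEdgeWeight_nonneg n α hα.le i j
    have hsingle : ∀ c ∈ C, α * 2 ^ (n - c.length) / 4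
        ≤ ∑ j ∈ S \ Y, lazyEdgeWeight n α c j := by
      intro c hc
      obtain ⟨hcY, hcne, hcd⟩ := hCmem c hc
      have hcS : c ∈ S := hYS hcY
      have hdS : c.dropLast ∈ S \ Y :=
        Finset.mem_sdiff.mpr ⟨hclosed c hcS hcne, hcd⟩
      have hw : lazyEdgeWeight n α c c.dropLast = α * 2 ^ (n - c.length) / 4 := by
        unfold lazyEdgeWeight
        rw [if_pos ⟨hcne, rfl⟩, List.length_dropLast]
        have h1 : 1 ≤ c.length := List.length_pos_iff.mpr hcne
        have h2 : c.length ≤ n := hheight c hcS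
        have h3 : n - (c.length - 1) = (n - c.length) + 1 := by omega
        rw [h3, pow_succ]
        ring
      calc α * 2 ^ (n - c.length) / 4 = lazyEdgeWeight n α c c.dropLast := hw.symm
        _ ≤ ∑ j ∈ S \ Y, lazyEdgeWeight n α c j :=
          Finset.single_le_sum (fun j _ => lazyEdgeWeight_nonneg n α hα.le c j) hdS
    calc ∑ c ∈ C, α * 2 ^ (n - c.length)
        = 4 * ∑ c ∈ C, α * 2 ^ (n - c.length) / 4 := by
          rw [Finset.mul_sum]; apply Finset.sum_congr rfl; intros; ring
      _ ≤ 4 * ∑ c ∈ C, ∑ j ∈ S \ Y, lazyEdgeWeight n α c j := by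
          apply mul_le_mul_of_nonneg_left (Finset.sum_le_sum hsingle) (by norm_num)
      _ ≤ 4 * ∑ i ∈ Y, ∑ j ∈ S \ Y, lazyEdgeWeight n α i j := by
          apply mul_le_mul_of_nonneg_left hsub (by norm_num)
  -- combine
  have hD : (0:ℝ) < 4 * (n + 1) := by positivity
  rw [div_le_iff₀ hD]
  calc ∑ i ∈ Y, α * 2 ^ (n - i.length)
      ≤ (n + 1) * ∑ c ∈ C, α * 2 ^ (n - c.length) := hA
    _ ≤ (n + 1) * (4 * ∑ i ∈ Y, ∑ j ∈ S \ Y, lazyEdgeWeight n α i j) := by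
        apply mul_le_mul_of_nonneg_left hB (by positivity)
    _ = (∑ i ∈ Y, ∑ j ∈ S \ Y, lazyEdgeWeight n α i j) * (4 * (n + 1)) := by ring


/-- Conductance lower bound for the lazy tree walk: for every subset `Y` of the
nodes of a binary tree `S` of height at most `n` with 0 < π(Y) ≤ 1/2, the cut
weight leaving `Y` is at least π(Y)/(4(n+1)); i.e. the conductance is ≥ 1/(4(n+1)). -/
theorem conductance_lower_bound
    (n : ℕ) (S : Finset (List Bool)) (hroot : [] ∈ S)
    (hclosed : ∀ l ∈ S, l ≠ [] → l.dropLast ∈ S)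
    (hheight : ∀ l ∈ S, l.length ≤ n)
    (α : ℝ) (hα : 0 < α)
    (hnorm : ∑ i ∈ S, α * 2 ^ (n - i.length) = 1) :
    ∀ Y ⊆ S,
      0 < ∑ i ∈ Y, α * 2 ^ (n - i.length) →
      (∑ i ∈ Y, α * 2 ^ (n - i.length)) ≤ 1/2 →
      (∑ i ∈ Y, ∑ j ∈ S \ Y, lazyEdgeWeight n α i j)
        ≥ (∑ i ∈ Y, α * 2 ^ (n - i.length)) / (4 * (n + 1)) := by
  classical
  intro Y hYS hpos hhalf
  by_cases hrootY : [] ∈ Y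
  · -- apply the core lemma to the complement Z = S \ Y
    set Z : Finset (List Bool) := S \ Y with hZ
    have hZS : Z ⊆ S := Finset.sdiff_subset
    have hrootZ : [] ∉ Z := fun h => (Finset.mem_sdiff.mp h).2 hrootY
    have hcore := core n S hclosed hheight α hα Z hZS hrootZ
    have hSZ : S \ Z = Y := by
      rw [hZ, Finset.sdiff_sdiff_self_left, Finset.inter_eq_right.mpr hYS]
    rw [hSZ] at hcore
    -- the cut weight is symmetric
    have hswap : ∑ i ∈ Z, ∑ j ∈ Y, lazyEdgeWeight n α i j
        = ∑ i ∈ Y, ∑ j ∈ S \ Y, lazyEdgeWeight n α i j := by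
      rw [Finset.sum_comm]
      exact Finset.sum_congr rfl fun i _ =>
        Finset.sum_congr rfl fun j _ => lazyEdgeWeight_symm n α j i
    rw [hswap] at hcore
    -- π(Z) = 1 - π(Y) ≥ π(Y)
    have hsd : ∑ i ∈ Z, α * 2 ^ (n - i.length)
        = 1 - ∑ i ∈ Y, α * 2 ^ (n - i.length) := by
      have := Finset.sum_sdiff (f := fun i : List Bool => α * 2 ^ (n - i.length)) hYS
      rw [hnorm] at this
      linarith
    have hle : ∑ i ∈ Y, α * 2 ^ (n - i.length)
        ≤ ∑ i ∈ Z, α * 2 ^ (n - i.length) := by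
      rw [hsd]; linarith
    have hD : (0:ℝ) < 4 * (n + 1) := by positivity
    refine le_trans ?_ hcore
    apply div_le_div_of_nonneg_right hle hD.le
  · exact core n S hclosed hheight α hα Y hYS hrootY
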